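/- arXiv:1712.08375 — 2 statements merged into one kernel-verified Lean document; each statement's English description precedes it below -/
import Mathlib

section
/- Let f be a transcendental entire function, let α ∈ ℂ, let r > 0, and let T be a connected component of f⁻¹(B(α,r)) such that T is simply connected and the restriction of f is a covering map from T onto B(α,r) \ {α}. Then there exist R > 0 and a connected component V of T ∩ B(0,R) with the following property: whenever γ is a continuum (a nonempty compact connected subset of ℂ) contained in ℂ \ closure(B(0,R)) such that V is contained in a bounded connected component of T \ γ, the connected component of ℂ \ f(γ ∩ T) containing α is contained in B(α,r). -/
open Set Metric Filter Topology OnePoint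

noncomputable section

/-- A transcendental entire function: holomorphic on all of `ℂ` and not a polynomial. -/
def EntireTranscendental (f : ℂ → ℂ) : Prop :=
  Differentiable ℂ f ∧ ¬ ∃ p : Polynomial ℂ, ∀ z, f z = p.eval z

/-- The escaping set `I(f)`. -/
def escapingSet (f : ℂ → ℂ) : Set ℂ :=
  {z | Tendsto (fun n => ‖f^[n] z‖) atTop atTop}

/-- The bounded orbit set `BO(f)`. -/
def boundedOrbitSet (f : ℂ → ℂ) : Set ℂ :=
  {z | ∃ K > 0, ∀ n : ℕ, ‖f^[n] z‖ < K}

/-- The bungee set `BU(f) = ℂ \ (I(f) ∪ BO(f))`. -/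
def bungeeSet (f : ℂ → ℂ) : Set ℂ := (escapingSet f ∪ boundedOrbitSet f)ᶜ

/-- The Fatou set: points where the family of iterates `(fⁿ)ₙ≥₁`, viewed as maps into the
one-point compactification of `ℂ` (with its unique compatible uniform structure, coming
from compactness and Hausdorffness), is equicontinuous. -/
def fatouSet (f : ℂ → ℂ) : Set ℂ :=
  letI : UniformSpace (OnePoint ℂ) := uniformSpaceOfCompactR1
  {z | EquicontinuousAt (fun (n : ℕ) (w : ℂ) => ((f^[n + 1] w : ℂ) : OnePoint ℂ)) z}

/-- The Julia set `J(f) = ℂ \ F(f)`. -/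
def juliaSet (f : ℂ → ℂ) : Set ℂ := (fatouSet f)ᶜ

/-- `U` is a Fatou component of `f`: a connected component of the Fatou set. -/
def IsFatouComponent (f : ℂ → ℂ) (U : Set ℂ) : Prop :=
  ∃ z ∈ fatouSet f, U = connectedComponentIn (fatouSet f) z

/-- `S ∪ {∞}` as a subset of the one-point compactification `ℂ ∪ {∞}`. -/
def withInfty (S : Set ℂ) : Set (OnePoint ℂ) :=
  ((↑) : ℂ → OnePoint ℂ) '' S ∪ {∞}

/-- `α` is a finite logarithmic asymptotic value of `f`: for some `r > 0` there is a
connected component `U` of `f⁻¹(B(α,r))` which is simply connected, and the restriction of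
`f` is a covering map from `U` onto `B(α,r) \ {α}`. -/
def IsLogAsymptoticValue (f : ℂ → ℂ) (α : ℂ) : Prop :=
  ∃ r > (0 : ℝ), ∃ U : Set ℂ,
    (∃ z ∈ f ⁻¹' Metric.ball α r, U = connectedComponentIn (f ⁻¹' Metric.ball α r) z) ∧
    SimplyConnectedSpace U ∧
    ∃ h : Set.MapsTo f U (Metric.ball α r \ {α}),
      IsCoveringMap (Set.MapsTo.restrict f U (Metric.ball α r \ {α}) h) ∧
      Function.Surjective (Set.MapsTo.restrict f U (Metric.ball α r \ {α}) h)

/-- `E ⊆ ℂ` is a spider's web. -/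
def SpidersWeb (E : Set ℂ) : Prop :=
  IsConnected E ∧ ∃ G : ℕ → Set ℂ,
    (∀ n, Bornology.IsBounded (G n) ∧ IsOpen (G n) ∧ SimplyConnectedSpace (G n)) ∧
    (∀ n, frontier (G n) ⊆ E) ∧ (∀ n, G n ⊆ G (n + 1)) ∧ (⋃ n, G n) = Set.univ

/-- `E` separates the point `z` from infinity. -/
def SeparatesFromInfinity (E : Set ℂ) (z : ℂ) : Prop :=
  ∃ U : Set ℂ, Bornology.IsBounded U ∧ IsOpen U ∧ z ∈ U ∧ frontier U ⊆ E

/-- The maximum modulus `M(r, f)`. -/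
def maxModulus (f : ℂ → ℂ) (r : ℝ) : ℝ :=
  sSup ((fun z => ‖f z‖) '' Metric.sphere (0 : ℂ) r)

/-- The fast escaping set `A(f)`, defined relative to `R`. -/
def fastEscapingSet (f : ℂ → ℂ) (R : ℝ) : Set ℂ :=
  {z | ∃ ℓ : ℕ, ∀ n : ℕ, (fun r => maxModulus f r)^[n] R ≤ ‖f^[n + ℓ] z‖}

/-- `α` is a finite asymptotic value of `f`: there is a continuous curve tending to `∞`
along which `f` tends to `α`. -/
def IsAsymptoticValue (f : ℂ → ℂ) (α : ℂ) : Prop :=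
  ∃ γ : ℝ → ℂ, Continuous γ ∧
    Tendsto (fun t => ‖γ t‖) atTop atTop ∧
    Tendsto (fun t => f (γ t)) atTop (nhds α)

/-- The set of critical values of `f`. -/
def criticalValues (f : ℂ → ℂ) : Set ℂ :=
  {w | ∃ z, deriv f z = 0 ∧ f z = w}

theorem isConnected_ball_diff_singleton {α : ℂ} {ε : ℝ} (hε : 0 < ε) :
    IsConnected (Metric.ball α ε \ {α}) := by
  have habs : ∀ x y : ℝ, ‖↑x + ↑y * Complex.I‖ ≤ |x| + |y| := by
    intro x y
    calc ‖↑x + ↑y * Complex.I‖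
        ≤ ‖(x:ℂ)‖ + ‖↑y * Complex.I‖ := norm_add_le _ _
      _ = |x| + |y| := by rw [norm_mul, Complex.norm_I, Complex.norm_real, Real.norm_eq_abs, Complex.norm_real, Real.norm_eq_abs,
          mul_one]
  have hmem : ∀ x y : ℝ, |x| < ε/2 → |y| < ε/2 → α + (↑x + ↑y * Complex.I) ∈ Metric.ball α ε := by
    intro x y hx hy
    rw [mem_ball, Complex.dist_eq, add_sub_cancel_left]
    calc ‖↑x + ↑y * Complex.I‖ ≤ |x| + |y| := habs x y
      _ < ε := by linarith
  have hre : ∀ x y : ℝ, (α + (↑x + ↑y * Complex.I)).re = α.re + x := by intro x y; simp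
  have him : ∀ x y : ℝ, (α + (↑x + ↑y * Complex.I)).im = α.im + y := by intro x y; simp
  have hq : |ε/4| < ε/2 := by rw [abs_of_pos (by linarith)]; linarith
  have hqn : |(-(ε/4))| < ε/2 := by rwa [abs_neg]
  have hq0 : |(0:ℝ)| < ε/2 := by simpa using by linarith
  have hc1 : IsConnected (Metric.ball α ε ∩ {z | α.re < z.re}) :=
    ⟨⟨_, hmem (ε/4) 0 hq hq0, by rw [mem_setOf_eq, hre]; linarith⟩,
      ((convex_ball α ε).inter (convex_halfSpace_re_gt _)).isPreconnected⟩
  have hc2 : IsConnected (Metric.ball α ε ∩ {z | α.im < z.im}) :=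
    ⟨⟨_, hmem 0 (ε/4) hq0 hq, by rw [mem_setOf_eq, him]; linarith⟩,
      ((convex_ball α ε).inter (convex_halfSpace_im_gt _)).isPreconnected⟩
  have hc3 : IsConnected (Metric.ball α ε ∩ {z | z.re < α.re}) :=
    ⟨⟨_, hmem (-(ε/4)) 0 hqn hq0, by rw [mem_setOf_eq, hre]; linarith⟩,
      ((convex_ball α ε).inter (convex_halfSpace_re_lt _)).isPreconnected⟩
  have hc4 : IsConnected (Metric.ball α ε ∩ {z | z.im < α.im}) :=
    ⟨⟨_, hmem 0 (-(ε/4)) hq0 hqn, by rw [mem_setOf_eq, him]; linarith⟩,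
      ((convex_ball α ε).inter (convex_halfSpace_im_lt _)).isPreconnected⟩
  have h12 : ((Metric.ball α ε ∩ {z | α.re < z.re}) ∩
      (Metric.ball α ε ∩ {z | α.im < z.im})).Nonempty := by
    refine ⟨α + (↑(ε/4) + ↑(ε/4) * Complex.I), ⟨hmem (ε/4) (ε/4) hq hq, ?_⟩,
      ⟨hmem (ε/4) (ε/4) hq hq, ?_⟩⟩
    · rw [mem_setOf_eq, hre]; linarith
    · rw [mem_setOf_eq, him]; linarith
  have h23 : ((Metric.ball α ε ∩ {z | α.im < z.im}) ∩
      (Metric.ball α ε ∩ {z | z.re < α.re})).Nonempty := by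
    refine ⟨α + (↑(-(ε/4)) + ↑(ε/4) * Complex.I), ⟨hmem (-(ε/4)) (ε/4) hqn hq, ?_⟩,
      ⟨hmem (-(ε/4)) (ε/4) hqn hq, ?_⟩⟩
    · rw [mem_setOf_eq, him]; linarith
    · rw [mem_setOf_eq, hre]; linarith
  have h34 : ((Metric.ball α ε ∩ {z | z.re < α.re}) ∩
      (Metric.ball α ε ∩ {z | z.im < α.im})).Nonempty := by
    refine ⟨α + (↑(-(ε/4)) + ↑(-(ε/4)) * Complex.I), ⟨hmem (-(ε/4)) (-(ε/4)) hqn hqn, ?_⟩,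
      ⟨hmem (-(ε/4)) (-(ε/4)) hqn hqn, ?_⟩⟩
    · rw [mem_setOf_eq, hre]; linarith
    · rw [mem_setOf_eq, him]; linarith
  have hu12 := hc1.union h12 hc2
  have hu123 : IsConnected ((Metric.ball α ε ∩ {z | α.re < z.re}) ∪
      (Metric.ball α ε ∩ {z | α.im < z.im}) ∪ (Metric.ball α ε ∩ {z | z.re < α.re})) := by
    refine IsConnected.union ?_ hu12 hc3
    obtain ⟨z, hz2, hz3⟩ := h23
    exact ⟨z, Or.inr hz2, hz3⟩
  have hu : IsConnected ((Metric.ball α ε ∩ {z | α.re < z.re}) ∪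
      (Metric.ball α ε ∩ {z | α.im < z.im}) ∪ (Metric.ball α ε ∩ {z | z.re < α.re}) ∪
      (Metric.ball α ε ∩ {z | z.im < α.im})) := by
    refine IsConnected.union ?_ hu123 hc4
    obtain ⟨z, hz3, hz4⟩ := h34
    exact ⟨z, Or.inr hz3, hz4⟩
  have heq : (Metric.ball α ε ∩ {z | α.re < z.re}) ∪
      (Metric.ball α ε ∩ {z | α.im < z.im}) ∪ (Metric.ball α ε ∩ {z | z.re < α.re}) ∪
      (Metric.ball α ε ∩ {z | z.im < α.im}) = Metric.ball α ε \ {α} := by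
    ext z
    simp only [mem_union, mem_inter_iff, mem_diff, mem_setOf_eq, mem_singleton_iff]
    constructor
    · rintro (((⟨hb, h⟩ | ⟨hb, h⟩) | ⟨hb, h⟩) | ⟨hb, h⟩) <;>
        exact ⟨hb, fun He => by rw [He] at h; exact lt_irrefl _ h⟩
    · rintro ⟨hb, hne⟩
      have : z.re ≠ α.re ∨ z.im ≠ α.im := by
        by_contra hcon
        push_neg at hcon
        exact hne (Complex.ext hcon.1 hcon.2)
      rcases this with h | h
      · rcases h.lt_or_gt with h | h
        · exact Or.inl (Or.inr ⟨hb, h⟩)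
        · exact Or.inl (Or.inl (Or.inl ⟨hb, h⟩))
      · rcases h.lt_or_gt with h | h
        · exact Or.inr ⟨hb, h⟩
        · exact Or.inl (Or.inl (Or.inr ⟨hb, h⟩))
  rwa [heq] at hu


theorem mem_connectedComponentIn_of_closure {α : Type*} [TopologicalSpace α]
    [LocallyConnectedSpace α] {Ω : Set α} (hΩ : IsOpen Ω) {w x : α}
    (hx : x ∈ closure (connectedComponentIn Ω w)) (hxΩ : x ∈ Ω) :
    x ∈ connectedComponentIn Ω w := by
  have hxc : x ∈ connectedComponentIn Ω x := mem_connectedComponentIn hxΩ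
  have hopen : IsOpen (connectedComponentIn Ω x) := hΩ.connectedComponentIn
  obtain ⟨y, hy1, hy2⟩ := mem_closure_iff.mp hx _ hopen hxc
  have e1 : connectedComponentIn Ω x = connectedComponentIn Ω y := connectedComponentIn_eq hy1
  have e2 : connectedComponentIn Ω w = connectedComponentIn Ω y := connectedComponentIn_eq hy2
  rw [e2, ← e1]
  exact hxc


/-- Path lifting along `[0,1]` for covering maps. -/
theorem IsCoveringMap.exists_liftOn_Icc {E X : Type*} [TopologicalSpace E] [TopologicalSpace X]
    {F : E → X} (hF : IsCoveringMap F) {c : ℝ → X} (hc : Continuous c) (e₀ : E)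
    (h₀ : F e₀ = c 0) :
    ∃ ℓ : ℝ → E, ContinuousOn ℓ (Icc 0 1) ∧ ℓ 0 = e₀ ∧ ∀ t ∈ Icc (0:ℝ) 1, F (ℓ t) = c t := by
  classical
  set S : Set ℝ := {b | b ∈ Icc (0:ℝ) 1 ∧ ∃ ℓ : ℝ → E, ContinuousOn ℓ (Icc 0 b) ∧ ℓ 0 = e₀ ∧
    ∀ t ∈ Icc (0:ℝ) b, F (ℓ t) = c t} with hS
  have h0S : (0:ℝ) ∈ S := by
    refine ⟨⟨le_refl 0, zero_le_one⟩, fun _ => e₀, continuousOn_const, rfl, ?_⟩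
    intro t ht
    rw [Icc_self] at ht
    rw [mem_singleton_iff] at ht
    rw [ht, h₀]
  have hSne : S.Nonempty := ⟨0, h0S⟩
  have hSbdd : BddAbove S := ⟨1, fun b hb => hb.1.2⟩
  set b' : ℝ := sSup S with hb'
  have hb'0 : 0 ≤ b' := le_csSup hSbdd h0S
  have hb'1 : b' ≤ 1 := csSup_le hSne (fun b hb => hb.1.2)
  -- trivialization at c b'
  haveI : Nonempty (F ⁻¹' {c b'}) := by
    obtain ⟨_, U, hxU, hU, hfU, H, hH⟩ := hF (c b')
    obtain ⟨δ₁, hδ₁, hball₁⟩ := Metric.mem_nhds_iff.mp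
      (hc.continuousAt.preimage_mem_nhds (hU.mem_nhds hxU))
    obtain ⟨b₁, hb₁S, hb₁⟩ : ∃ b ∈ S, b' - δ₁ < b := by
      rcases lt_or_ge (b' - δ₁) 0 with h | h
      · exact ⟨0, h0S, h⟩
      · obtain ⟨b, hbS, hb⟩ := exists_lt_of_lt_csSup hSne (by linarith : b' - δ₁ < b')
        exact ⟨b, hbS, hb⟩
    have hb₁b' : b₁ ≤ b' := le_csSup hSbdd hb₁S
    obtain ⟨⟨hb₁0, _⟩, ℓ₁, _, _, hℓ₁F⟩ := hb₁S
    have hmem : ℓ₁ b₁ ∈ F ⁻¹' U := by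
      rw [mem_preimage, hℓ₁F b₁ ⟨hb₁0, le_refl b₁⟩]
      apply hball₁
      rw [mem_ball, Real.dist_eq, abs_lt]
      constructor <;> linarith
    exact ⟨(H ⟨ℓ₁ b₁, hmem⟩).2⟩
  obtain ⟨tv, htv⟩ : ∃ tv : Bundle.Trivialization (F ⁻¹' {c b'}) F, c b' ∈ tv.baseSet :=
    ⟨_, (hF (c b')).mem_toTrivialization_baseSet⟩
  -- δ such that c maps [b'-δ, b'+δ] into the base set
  have hnhds : c ⁻¹' tv.baseSet ∈ 𝓝 b' :=
    hc.continuousAt.preimage_mem_nhds (tv.open_baseSet.mem_nhds htv)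
  obtain ⟨δ₀, hδ₀, hball⟩ := Metric.mem_nhds_iff.mp hnhds
  set δ := δ₀ / 2 with hδdef
  have hδ : 0 < δ := by positivity
  have hsub : ∀ t : ℝ, |t - b'| ≤ δ → c t ∈ tv.baseSet := by
    intro t ht
    apply hball
    rw [mem_ball, Real.dist_eq]
    calc |t - b'| ≤ δ := ht
      _ < δ₀ := by rw [hδdef]; linarith
  -- pick b ∈ S with b' - δ < b
  obtain ⟨b, hbS, hbgt⟩ : ∃ b ∈ S, b' - δ < b := by
    rcases lt_or_ge (b' - δ) 0 with h | h
    · exact ⟨0, h0S, h⟩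
    · obtain ⟨b, hbS, hb⟩ := exists_lt_of_lt_csSup hSne (by linarith : b' - δ < b')
      exact ⟨b, hbS, hb⟩
  have hbb' : b ≤ b' := le_csSup hSbdd hbS
  obtain ⟨⟨hb0, hb1⟩, ℓ, hℓcont, hℓ0, hℓF⟩ := hbS
  set B : ℝ := min (b' + δ) 1 with hB
  have hbB : b ≤ B := le_min (by linarith) hb1
  have hb'B : b' ≤ B := le_min (by linarith) hb'1
  have hB1 : B ≤ 1 := min_le_right _ _
  have hB0 : 0 ≤ B := le_trans hb0 hbB
  have hcbase : ∀ t ∈ Icc b B, c t ∈ tv.baseSet := by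
    intro t ht
    apply hsub
    rw [abs_le]
    constructor
    · have : b' - δ < t := lt_of_lt_of_le hbgt ht.1
      linarith
    · have : t ≤ b' + δ := le_trans ht.2 (min_le_left _ _)
      linarith
  have hℓb_src : ℓ b ∈ tv.source := by
    rw [tv.mem_source, hℓF b ⟨hb0, le_refl b⟩]
    exact hcbase b ⟨le_refl b, hbB⟩
  set i₀ := (tv (ℓ b)).2 with hi₀
  set g : ℝ → E := fun t => tv.toOpenPartialHomeomorph.symm (c t, i₀) with hg
  have hgb : g b = ℓ b := by
    have h1 : (tv (ℓ b)).1 = F (ℓ b) := tv.coe_fst hℓb_src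
    have h2 : F (ℓ b) = c b := hℓF b ⟨hb0, le_refl b⟩
    have key : ((c b, i₀) : X × (F ⁻¹' {c b'})) = tv (ℓ b) := by
      refine Prod.ext ?_ rfl
      rw [h1, h2]
    show tv.toOpenPartialHomeomorph.symm (c b, i₀) = ℓ b
    rw [key]
    exact tv.toOpenPartialHomeomorph.left_inv hℓb_src
  have hgsrc : ∀ t ∈ Icc b B, (c t, i₀) ∈ tv.target := by
    intro t ht
    rw [tv.mem_target]
    exact hcbase t ht
  have hgF : ∀ t ∈ Icc b B, F (g t) = c t := by
    intro t ht
    exact tv.proj_symm_apply (hgsrc t ht)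
  have hgcont : ContinuousOn g (Icc b B) := by
    refine tv.toOpenPartialHomeomorph.continuousOn_symm.comp
      ((hc.prodMk continuous_const).continuousOn) ?_
    exact fun t ht => hgsrc t ht
  -- glue
  set ℓ' : ℝ → E := fun t => if t ≤ b then ℓ t else g t with hℓ'
  have hℓ'eq1 : EqOn ℓ' ℓ (Icc 0 b) := by
    intro t ht
    simp only [hℓ', if_pos ht.2]
  have hℓ'eq2 : EqOn ℓ' g (Icc b B) := by
    intro t ht
    by_cases h : t ≤ b
    · have heqt : t = b := le_antisymm h ht.1
      subst heqt
      show (if t ≤ t then ℓ t else g t) = g t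
      rw [if_pos (le_refl t), ← hgb]
    · simp only [hℓ', if_neg h]
  have hℓ'cont : ContinuousOn ℓ' (Icc 0 B) := by
    have : Icc (0:ℝ) B = Icc 0 b ∪ Icc b B := (Icc_union_Icc_eq_Icc hb0 hbB).symm
    rw [this]
    exact ContinuousOn.union_of_isClosed (hℓcont.congr hℓ'eq1) (hgcont.congr hℓ'eq2)
      isClosed_Icc isClosed_Icc
  have hBS : B ∈ S := by
    refine ⟨⟨hB0, hB1⟩, ℓ', hℓ'cont, ?_, ?_⟩
    · rw [hℓ'eq1 ⟨le_refl 0, hb0⟩, hℓ0]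
    · intro t ht
      by_cases h : t ≤ b
      · rw [hℓ'eq1 ⟨ht.1, h⟩]
        exact hℓF t ⟨ht.1, h⟩
      · push_neg at h
        rw [hℓ'eq2 ⟨le_of_lt h, ht.2⟩]
        exact hgF t ⟨le_of_lt h, ht.2⟩
  have hBb' : B ≤ b' := le_csSup hSbdd hBS
  have hb'eq : b' = 1 := by
    by_contra hne
    have h1 : b' < 1 := lt_of_le_of_ne hb'1 hne
    have : b' < B := by
      rw [hB]
      rcases le_or_gt (b' + δ) 1 with h | h
      · rw [min_eq_left h]; linarith
      · rw [min_eq_right (le_of_lt h)]; exact h1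
    linarith
  have : B = 1 := le_antisymm hB1 (by rw [← hb'eq]; exact hb'B)
  obtain ⟨_, ℓf, h1, h2, h3⟩ := hBS
  exact ⟨ℓf, by rwa [this] at h1, h2, by rwa [this] at h3⟩


theorem logarithmic_tract_lemma (f : ℂ → ℂ) (hf : EntireTranscendental f)
    (α : ℂ) (r : ℝ) (hr : 0 < r) (T : Set ℂ)
    (hT : ∃ z ∈ f ⁻¹' Metric.ball α r, T = connectedComponentIn (f ⁻¹' Metric.ball α r) z)
    (hTsc : SimplyConnectedSpace T)
    (hmaps : Set.MapsTo f T (Metric.ball α r \ {α}))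
    (hcov : IsCoveringMap (Set.MapsTo.restrict f T (Metric.ball α r \ {α}) hmaps))
    (hsurj : Function.Surjective (Set.MapsTo.restrict f T (Metric.ball α r \ {α}) hmaps)) :
    ∃ R > (0 : ℝ), ∃ V : Set ℂ,
      (∃ z ∈ T ∩ Metric.ball (0 : ℂ) R,
        V = connectedComponentIn (T ∩ Metric.ball (0 : ℂ) R) z) ∧
      ∀ γ : Set ℂ, γ.Nonempty → IsCompact γ → IsConnected γ →
        γ ⊆ (closure (Metric.ball (0 : ℂ) R))ᶜ →
        (∃ w ∈ T \ γ, V ⊆ connectedComponentIn (T \ γ) w ∧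
          Bornology.IsBounded (connectedComponentIn (T \ γ) w)) →
        connectedComponentIn (f '' (γ ∩ T))ᶜ α ⊆ Metric.ball α r := by
  classical
  have hfc : Continuous f := hf.1.continuous
  obtain ⟨zT, hzTpre, hTeq⟩ := hT
  have hΩo : IsOpen (f ⁻¹' Metric.ball α r) := isOpen_ball.preimage hfc
  have hTopen : IsOpen T := by rw [hTeq]; exact hΩo.connectedComponentIn
  have hzT : zT ∈ T := by rw [hTeq]; exact mem_connectedComponentIn hzTpre
  have hTsub : T ⊆ f ⁻¹' Metric.ball α r := by
    rw [hTeq]; exact connectedComponentIn_subset _ _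
  have absorbT : ∀ x, x ∈ closure T → f x ∈ Metric.ball α r → x ∈ T := by
    intro x hx hfx
    rw [hTeq] at hx ⊢
    exact mem_connectedComponentIn_of_closure hΩo hx hfx
  have hβP : f zT ∈ Metric.ball α r \ {α} := hmaps hzT
  set β := f zT with hβdef
  have hβne : β - α ≠ 0 := sub_ne_zero.mpr (by simpa using hβP.2)
  set s := ‖β - α‖ with hsdef
  have hs0 : 0 < s := by rw [hsdef]; exact norm_pos_iff.mpr hβne
  have hsr : s < r := by
    have := mem_ball.mp hβP.1
    rwa [Complex.dist_eq] at this
  set c : ℝ → ℂ := fun t => α + (β - α) * Complex.exp (((2 * Real.pi * t : ℝ) : ℂ) * Complex.I)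
    with hcdef
  have hccont : Continuous c := by
    apply continuous_const.add
    apply continuous_const.mul
    exact Complex.continuous_exp.comp
      ((Complex.continuous_ofReal.comp (by continuity)).mul continuous_const)
  have habs_exp : ∀ x : ℝ, ‖Complex.exp ((x:ℂ) * Complex.I)‖ = 1 := by
    intro x; rw [Complex.norm_exp]; simp
  have hcabs : ∀ t, ‖c t - α‖ = s := by
    intro t
    show ‖α + (β - α) * Complex.exp _ - α‖ = s
    rw [add_sub_cancel_left, norm_mul, habs_exp, mul_one]
  have hcP : ∀ t, c t ∈ Metric.ball α r \ {α} := by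
    intro t
    constructor
    · rw [mem_ball, Complex.dist_eq, hcabs t]; exact hsr
    · intro h
      rw [mem_singleton_iff] at h
      have h2 := hcabs t
      rw [h, sub_self, norm_zero] at h2
      exact hs0.ne h2
  have hc0 : c 0 = β := by
    show α + (β - α) * Complex.exp _ = β
    norm_num
  -- lift the circle
  have hstart : Set.MapsTo.restrict f T (Metric.ball α r \ {α}) hmaps ⟨zT, hzT⟩ =
      (fun t : ℝ => (⟨c t, hcP t⟩ : ↥(Metric.ball α r \ {α}))) 0 := by
    apply Subtype.ext
    rw [Set.MapsTo.val_restrict_apply]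
    exact hc0.symm
  obtain ⟨L, hLcont, hL0, hLc⟩ := hcov.exists_liftOn_Icc
    (hccont.subtype_mk (fun t => hcP t)) ⟨zT, hzT⟩ hstart
  set lam : ℝ → ℂ := fun t => ((L t : T) : ℂ) with hlamdef
  have hlamcont : ContinuousOn lam (Icc 0 1) :=
    continuous_subtype_val.comp_continuousOn hLcont
  have hlamT : ∀ t, lam t ∈ T := fun t => ((L t : T)).2
  have hflam : ∀ t ∈ Icc (0:ℝ) 1, f (lam t) = c t := by
    intro t ht
    have h1 := congrArg Subtype.val (hLc t ht)
    rwa [Set.MapsTo.val_restrict_apply] at h1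
  have hlam0 : lam 0 = zT := by
    show ((L 0 : T) : ℂ) = zT
    rw [hL0]
  -- choose R
  have habscont : ContinuousOn (fun t => ‖lam t‖) (Icc (0:ℝ) 1) :=
    continuous_norm.comp_continuousOn hlamcont
  obtain ⟨R₀, hR₀mem⟩ := (isCompact_Icc.image_of_continuousOn habscont).bddAbove
  have hR₀ : ∀ t ∈ Icc (0:ℝ) 1, ‖lam t‖ ≤ R₀ := fun t ht =>
    hR₀mem ⟨t, ht, rfl⟩
  have hR₀0 : 0 ≤ R₀ := le_trans (norm_nonneg _) (hR₀ 0 ⟨le_refl 0, zero_le_one⟩)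
  set R := R₀ + 1 with hRdef
  have hRpos : 0 < R := by linarith
  have hzTball : zT ∈ Metric.ball (0:ℂ) R := by
    rw [mem_ball, Complex.dist_eq, sub_zero, ← hlam0]
    have := hR₀ 0 ⟨le_refl 0, zero_le_one⟩
    linarith
  refine ⟨R, hRpos, connectedComponentIn (T ∩ Metric.ball 0 R) zT,
    ⟨zT, ⟨hzT, hzTball⟩, rfl⟩, ?_⟩
  intro γ hγne hγcomp hγconn hγout hyp
  obtain ⟨w, hw, hVW, hWbd⟩ := hyp
  set W := connectedComponentIn (T \ γ) w with hWdef
  have hzW : zT ∈ W := hVW (mem_connectedComponentIn ⟨hzT, hzTball⟩)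
  have hTγopen : IsOpen (T \ γ) := hTopen.sdiff hγcomp.isClosed
  have hWopen : IsOpen W := hTγopen.connectedComponentIn
  have hWsubT : W ⊆ T := (connectedComponentIn_subset _ _).trans diff_subset
  have absorbW : ∀ x, x ∈ closure W → x ∈ T \ γ → x ∈ W := fun x hx hxΩ =>
    mem_connectedComponentIn_of_closure hTγopen hx hxΩ
  have hWclcpt : IsCompact (closure W) := hWbd.isCompact_closure
  -- exit lemma
  have exitlem : ∀ m : ℝ → ℂ, ContinuousOn m (Icc 0 1) → (∀ t ∈ Icc (0:ℝ) 1, m t ∈ T) →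
      m 0 ∈ W → (∀ t ∈ Icc (0:ℝ) 1, m t ∉ γ) → ∀ t ∈ Icc (0:ℝ) 1, m t ∈ W := by
    intro m hmc hmT hm0 hmγ
    by_contra hbad
    push_neg at hbad
    obtain ⟨t₁, ht₁, ht₁W⟩ := hbad
    set S := Icc (0:ℝ) 1 ∩ m ⁻¹' Wᶜ with hSdef
    have hScl : IsClosed S := hmc.preimage_isClosed_of_isClosed isClosed_Icc
      hWopen.isClosed_compl
    have hSne : S.Nonempty := ⟨t₁, ht₁, ht₁W⟩
    have hSbd : BddBelow S := ⟨0, fun t ht => ht.1.1⟩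
    set t₀ := sInf S with ht₀def
    have ht₀S : t₀ ∈ S := hScl.csInf_mem hSne hSbd
    have ht₀I : t₀ ∈ Icc (0:ℝ) 1 := ht₀S.1
    have ht₀pos : 0 < t₀ := by
      rcases (ht₀I.1).lt_or_eq with h | h
      · exact h
      · exact absurd hm0 (by rw [h]; exact ht₀S.2)
    have hlow : ∀ t, t ∈ Ico (0:ℝ) t₀ → m t ∈ W := by
      intro t ht
      by_contra hc2
      have htS : t ∈ S := ⟨⟨ht.1, le_trans ht.2.le ht₀I.2⟩, hc2⟩
      exact absurd (csInf_le hSbd htS) (not_le.mpr ht.2)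
    have hclW : m t₀ ∈ closure W := by
      have hne : (𝓝[Ico (0:ℝ) t₀] t₀).NeBot := by
        rw [← mem_closure_iff_nhdsWithin_neBot, closure_Ico ht₀pos.ne]
        exact ⟨ht₀pos.le, le_refl t₀⟩
      have htend : Tendsto m (𝓝[Ico (0:ℝ) t₀] t₀) (𝓝 (m t₀)) :=
        ((hmc t₀ ht₀I).mono (fun x hx => ⟨hx.1, le_trans hx.2.le ht₀I.2⟩)).tendsto
      exact mem_closure_of_tendsto htend (eventually_mem_nhdsWithin.mono hlow)
    exact absurd (absorbW _ hclW ⟨hmT t₀ ht₀I, hmγ t₀ ht₀I⟩) ht₀S.2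
  -- the lifted circle stays in W
  have hlamW : ∀ t ∈ Icc (0:ℝ) 1, lam t ∈ W := by
    apply exitlem lam hlamcont (fun t _ => hlamT t) (by rw [hlam0]; exact hzW)
    intro t ht hγmem
    apply hγout hγmem
    apply subset_closure
    rw [mem_ball, Complex.dist_eq, sub_zero]
    have := hR₀ t ht
    linarith
  -- the circle of radius s is contained in f '' W
  have hCsA : ∀ w', ‖w' - α‖ = s → w' ∈ f '' W := by
    intro w' hw'
    set ζ := (w' - α) / (β - α) with hζdef
    have hζabs : ‖ζ‖ = 1 := by
      rw [hζdef, norm_div, hw', ← hsdef, div_self hs0.ne']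
    have hexp : Complex.exp ((Complex.arg ζ : ℂ) * Complex.I) = ζ := by
      have h1 := Complex.norm_mul_exp_arg_mul_I ζ
      rwa [hζabs, Complex.ofReal_one, one_mul] at h1
    have hθ1 : -Real.pi < Complex.arg ζ := Complex.neg_pi_lt_arg ζ
    have hθ2 : Complex.arg ζ ≤ Real.pi := Complex.arg_le_pi ζ
    have hπ : 0 < Real.pi := Real.pi_pos
    obtain ⟨t, htI, hkey⟩ : ∃ t ∈ Icc (0:ℝ) 1,
        Complex.exp (((2 * Real.pi * t : ℝ) : ℂ) * Complex.I) = ζ := by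
      set θ := Complex.arg ζ with hθdef
      by_cases h : 0 ≤ θ
      · refine ⟨θ / (2 * Real.pi), ⟨by positivity, ?_⟩, ?_⟩
        · rw [div_le_one (by positivity)]; linarith
        · have heq : (2 * Real.pi * (θ / (2 * Real.pi)) : ℝ) = θ := by field_simp
          rw [heq]; exact hexp
      · push_neg at h
        have h6 : -(1:ℝ)/2 < θ / (2 * Real.pi) := by
          rw [div_lt_div_iff₀ (by norm_num) (by positivity)]
          linarith
        have h7 : θ / (2 * Real.pi) < 0 := div_neg_of_neg_of_pos h (by positivity)
        refine ⟨θ / (2 * Real.pi) + 1, ⟨by linarith, by linarith⟩, ?_⟩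
        have heq : (2 * Real.pi * (θ / (2 * Real.pi) + 1) : ℝ) = θ + 2 * Real.pi := by
          field_simp
        have h2pi : Complex.exp (((2 * Real.pi : ℝ) : ℂ) * Complex.I) = 1 := by
          push_cast
          exact Complex.exp_two_pi_mul_I
        rw [heq, Complex.ofReal_add, add_mul, Complex.exp_add, hexp, h2pi, mul_one]
    refine ⟨lam t, hlamW t htI, ?_⟩
    rw [hflam t htI]
    show α + (β - α) * Complex.exp _ = w'
    rw [hkey, hζdef]
    have hfin : (β - α) * ((w' - α) / (β - α)) = w' - α := by field_simp
    rw [hfin]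
    ring
  -- image of γ ∩ T
  set fimg := f '' (γ ∩ T) with hfimgdef
  have hfimgP : fimg ⊆ Metric.ball α r \ {α} := by
    rintro x ⟨y, hy, rfl⟩
    exact hmaps hy.2
  have hαfimg : α ∉ fimg := fun h => (hfimgP h).2 rfl
  have hfimgcl : closure fimg ⊆ fimg ∪ Metric.sphere α r := by
    have hK : IsCompact (closure (γ ∩ T)) := hγcomp.of_isClosed_subset isClosed_closure
      (closure_minimal inter_subset_left hγcomp.isClosed)
    have h2 : closure fimg ⊆ f '' closure (γ ∩ T) :=
      closure_minimal (image_mono subset_closure) (hK.image hfc).isClosed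
    intro x hx
    obtain ⟨y, hy, rfl⟩ := h2 hx
    have hyγ : y ∈ γ := closure_minimal inter_subset_left hγcomp.isClosed hy
    have hyT : y ∈ closure T := closure_mono inter_subset_right hy
    have hfy : f y ∈ closedBall α r := by
      have h3 : y ∈ closure (f ⁻¹' Metric.ball α r) := closure_mono hTsub hyT
      have h4 := hfc.closure_preimage_subset _ h3
      rwa [closure_ball α hr.ne'] at h4
    rcases (mem_closedBall.mp hfy).lt_or_eq with h | h
    · left
      exact ⟨y, ⟨hyγ, absorbT y hyT (mem_ball.mpr h)⟩, rfl⟩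
    · right
      exact h
  have hαncl : α ∉ closure fimg := by
    intro h
    rcases hfimgcl h with h | h
    · exact hαfimg h
    · rw [mem_sphere, dist_self] at h
      exact hr.ne h
  obtain ⟨ε₁, hε₁pos, hε₁⟩ := Metric.mem_nhds_iff.mp
    (isClosed_closure.isOpen_compl.mem_nhds hαncl)
  set ε₀ := min ε₁ s / 2 with hε₀def
  have hε₀pos : 0 < ε₀ := by
    have := lt_min hε₁pos hs0
    rw [hε₀def]
    positivity
  have hε₀s : ε₀ < s := by
    have h1 : min ε₁ s ≤ s := min_le_right _ _
    rw [hε₀def]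
    linarith
  have hε₀r : ε₀ < r := lt_trans hε₀s hsr
  have hballfimg : ∀ x ∈ Metric.ball α ε₀, x ∉ closure fimg := by
    intro x hx
    apply hε₁
    rw [mem_ball] at hx ⊢
    have h1 : min ε₁ s ≤ ε₁ := min_le_left _ _
    have : ε₀ ≤ ε₁ := by rw [hε₀def]; linarith [hε₁pos]
    linarith
  -- the open set U
  set U := (Metric.ball α r \ {α}) \ fimg with hUdef
  have hUeq : U = (Metric.ball α r \ {α}) ∩ (closure fimg)ᶜ := by
    apply Subset.antisymm
    · rintro x ⟨hxP, hxf⟩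
      refine ⟨hxP, fun hcl => ?_⟩
      rcases hfimgcl hcl with h | h
      · exact hxf h
      · rw [mem_sphere] at h
        exact (mem_ball.mp hxP.1).ne h
    · rintro x ⟨hxP, hxcl⟩
      exact ⟨hxP, fun h => hxcl (subset_closure h)⟩
  have hUopen : IsOpen U := by
    rw [hUeq]
    exact (isOpen_ball.sdiff isClosed_singleton).inter isClosed_closure.isOpen_compl
  -- base point p₁ near α
  set p₁ := α + ((ε₀/2 : ℝ) : ℂ) with hp₁def
  have hp₁dist : ‖p₁ - α‖ = ε₀/2 := by
    rw [hp₁def, add_sub_cancel_left, Complex.norm_real, Real.norm_eq_abs, abs_of_pos (half_pos hε₀pos)]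
  have hpunctU : Metric.ball α ε₀ \ {α} ⊆ U := by
    rintro x ⟨hx1, hx2⟩
    refine ⟨⟨?_, hx2⟩, fun h => hballfimg x hx1 (subset_closure h)⟩
    rw [mem_ball] at hx1 ⊢
    linarith
  have hp₁punct : p₁ ∈ Metric.ball α ε₀ \ {α} := by
    constructor
    · rw [mem_ball, Complex.dist_eq, hp₁dist]
      linarith
    · rw [mem_singleton_iff]
      intro h
      have := hp₁dist
      rw [h, sub_self, norm_zero] at this
      exact (half_pos hε₀pos).ne' this.symm
  have hp₁U : p₁ ∈ U := hpunctU hp₁punct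
  set N := connectedComponentIn U p₁ with hNdef
  have hNsubU : N ⊆ U := connectedComponentIn_subset _ _
  have hNopen : IsOpen N := hUopen.connectedComponentIn
  have hp₁N : p₁ ∈ N := mem_connectedComponentIn hp₁U
  have hNpre : IsPreconnected N := isPreconnected_connectedComponentIn
  have hpunctN : Metric.ball α ε₀ \ {α} ⊆ N :=
    (isConnected_ball_diff_singleton hε₀pos).isPreconnected.subset_connectedComponentIn
      hp₁punct hpunctU
  -- frontier of f '' W within the punctured ball lies in fimg
  have hfrA : ∀ x, x ∈ Metric.ball α r \ {α} → x ∈ closure (f '' W) →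
      x ∈ f '' W ∨ x ∈ fimg := by
    intro x hxP hxcl
    obtain ⟨u, hu, hulim⟩ := mem_closure_iff_seq_limit.mp hxcl
    choose v hvW hvf using hu
    obtain ⟨z₂, hz₂cl, φ, hφ, hφt⟩ := hWclcpt.tendsto_subseq
      (fun n => subset_closure (hvW n))
    have hfz : f z₂ = x := by
      have h1 : Tendsto (fun n => f (v (φ n))) atTop (𝓝 (f z₂)) :=
        (hfc.tendsto z₂).comp hφt
      have h2 : Tendsto (fun n => f (v (φ n))) atTop (𝓝 x) := by
        have h3 := hulim.comp hφ.tendsto_atTop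
        simpa only [Function.comp_def, hvf] using h3
      exact tendsto_nhds_unique h1 h2
    have hz₂T : z₂ ∈ T := absorbT z₂ (closure_mono hWsubT hz₂cl) (hfz ▸ hxP.1)
    by_cases hγ2 : z₂ ∈ γ
    · right
      exact ⟨z₂, ⟨hγ2, hz₂T⟩, hfz⟩
    · left
      exact ⟨z₂, absorbW z₂ hz₂cl ⟨hz₂T, hγ2⟩, hfz⟩
  -- openness of f '' W
  have hAopen : IsOpen (f '' W) := by
    have hPopen : IsOpen (Metric.ball α r \ {α}) := isOpen_ball.sdiff isClosed_singleton
    have homap : IsOpenMap (Subtype.val ∘ (Set.MapsTo.restrict f T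
        (Metric.ball α r \ {α}) hmaps)) := hPopen.isOpenMap_subtype_val.comp hcov.isOpenMap
    have hW'open : IsOpen ((Subtype.val : T → ℂ) ⁻¹' W) :=
      hWopen.preimage continuous_subtype_val
    have himg := homap _ hW'open
    have heq2 : (Subtype.val ∘ (Set.MapsTo.restrict f T (Metric.ball α r \ {α}) hmaps)) ''
        ((Subtype.val : T → ℂ) ⁻¹' W) = f '' W := by
      ext y
      simp only [mem_image, Function.comp_apply, mem_preimage]
      constructor
      · rintro ⟨x, hxW, rfl⟩
        exact ⟨x.val, hxW, (Set.MapsTo.val_restrict_apply hmaps x).symm⟩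
      · rintro ⟨x₀, hxW, rfl⟩
        exact ⟨⟨x₀, hWsubT hxW⟩, hxW, Set.MapsTo.val_restrict_apply hmaps _⟩
    rwa [heq2] at himg
  -- case analysis
  by_cases hcase : ∃ q ∈ N, s < ‖q - α‖
  · -- impossible case
    exfalso
    obtain ⟨q, hqN, hqs⟩ := hcase
    have hIVT := hNpre.intermediate_value hp₁N hqN
      ((continuous_norm.comp (continuous_id.sub continuous_const)).continuousOn
        : ContinuousOn (fun x => ‖x - α‖) N)
    have hsmem : s ∈ Icc (‖p₁ - α‖) (‖q - α‖) := by
      constructor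
      · rw [hp₁dist]; linarith
      · exact hqs.le
    obtain ⟨w', hw'N, hw'abs⟩ := hIVT hsmem
    have hw'A : w' ∈ f '' W := hCsA w' hw'abs
    have hNA : N ⊆ f '' W := by
      by_contra hnot
      rw [Set.not_subset] at hnot
      obtain ⟨x₂, hx₂N, hx₂A⟩ := hnot
      have hcover : N ⊆ f '' W ∪ (closure (f '' W))ᶜ := by
        intro x hxN
        by_cases h : x ∈ closure (f '' W)
        · rcases hfrA x (hNsubU hxN).1 h with h1 | h1
          · exact Or.inl h1
          · exact absurd h1 (hNsubU hxN).2
        · exact Or.inr h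
      have hx₂c : x₂ ∈ (closure (f '' W))ᶜ := (hcover hx₂N).resolve_left hx₂A
      obtain ⟨y, _, hyA, hyc⟩ := hNpre _ _ hAopen isClosed_closure.isOpen_compl hcover
        ⟨w', hw'N, hw'A⟩ ⟨x₂, hx₂N, hx₂c⟩
      exact hyc (subset_closure hyA)
    -- points converging to α inside f '' W
    have hpn : ∀ n : ℕ, α + ((ε₀/2/(n+1) : ℝ) : ℂ) ∈ f '' W := by
      intro n
      apply hNA
      apply hpunctN
      have hpos : (0:ℝ) < ε₀/2/(n+1) := by positivity
      have hle : (ε₀/2/(n+1) : ℝ) ≤ ε₀/2 := by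
        apply div_le_self (by positivity)
        exact le_add_of_nonneg_left (Nat.cast_nonneg n)
      constructor
      · rw [mem_ball, Complex.dist_eq, add_sub_cancel_left, Complex.norm_real, Real.norm_eq_abs,
          abs_of_pos hpos]
        linarith
      · rw [mem_singleton_iff]
        intro h
        have h2 : ((ε₀/2/(n+1) : ℝ) : ℂ) = 0 := by
          have := congrArg (fun z => z - α) h
          simpa using this
        rw [Complex.ofReal_eq_zero] at h2
        linarith
    choose z hzW hzf using hpn
    obtain ⟨z₂, hz₂cl, φ, hφ, hφt⟩ := hWclcpt.tendsto_subseq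
      (fun n => subset_closure (hzW n))
    have hfz₂ : f z₂ = α := by
      have h1 : Tendsto (fun n => f (z (φ n))) atTop (𝓝 (f z₂)) :=
        (hfc.tendsto z₂).comp hφt
      have h2 : Tendsto (fun n => f (z (φ n))) atTop (𝓝 α) := by
        have h3 : Tendsto (fun n : ℕ => α + ((ε₀/2/(n+1) : ℝ) : ℂ)) atTop (𝓝 α) := by
          have h4 : Tendsto (fun n : ℕ => (ε₀/2/(n+1) : ℝ)) atTop (𝓝 0) := by
            have h5 := tendsto_one_div_add_atTop_nhds_zero_nat (𝕜 := ℝ)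
            have h6 : (fun n : ℕ => (ε₀/2/(n+1) : ℝ)) =
                fun n : ℕ => (ε₀/2) * (1/(n+1)) := by
              funext n
              field_simp
            rw [h6]
            have := h5.const_mul (ε₀/2)
            simpa using this
          have h7 : Tendsto (fun n : ℕ => ((ε₀/2/(n+1) : ℝ) : ℂ)) atTop (𝓝 0) := by
            have h9 := (Complex.continuous_ofReal.tendsto 0).comp h4
            rw [Complex.ofReal_zero] at h9
            exact h9
          have h10 := Tendsto.add
            (tendsto_const_nhds : Tendsto (fun _ : ℕ => α) atTop (𝓝 α)) h7
          simpa using h10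
        have h8 := h3.comp hφ.tendsto_atTop
        simp only [Function.comp_def] at h8 ⊢
        simpa only [hzf] using h8
      exact tendsto_nhds_unique h1 h2
    have hz₂T : z₂ ∈ T := absorbT z₂ (closure_mono hWsubT hz₂cl)
      (by rw [hfz₂]; exact mem_ball_self hr)
    exact (hmaps hz₂T).2 (by rw [mem_singleton_iff, hfz₂])
  · -- main case: N stays within radius s
    push_neg at hcase
    set O := N ∪ Metric.ball α (ε₀/2) with hOdef
    have hαO : α ∈ O := Or.inr (mem_ball_self (half_pos hε₀pos))
    have hOopen : IsOpen O := hNopen.union isOpen_ball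
    have hαK : α ∈ (fimg)ᶜ := hαfimg
    have hclO : ∀ x ∈ closure O, x ∉ fimg → x ∈ O := by
      intro x hx hxf
      rw [hOdef, closure_union] at hx
      rcases hx with hx | hx
      · by_cases hxα : x = α
        · exact Or.inr (by rw [hxα]; exact mem_ball_self (half_pos hε₀pos))
        · have hxs : ‖x - α‖ ≤ s := by
            have hsub2 : closure N ⊆ {y : ℂ | ‖y - α‖ ≤ s} :=
              closure_minimal (fun y hy => hcase y hy)
                (isClosed_le (continuous_norm.comp
                  (continuous_id.sub continuous_const)) continuous_const)
            exact hsub2 hx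
          have hxU : x ∈ U := by
            refine ⟨⟨?_, hxα⟩, hxf⟩
            rw [mem_ball, Complex.dist_eq]
            linarith
          exact Or.inl (mem_connectedComponentIn_of_closure hUopen hx hxU)
      · rw [closure_ball α (half_pos hε₀pos).ne'] at hx
        by_cases hxα : x = α
        · exact Or.inr (by rw [hxα]; exact mem_ball_self (half_pos hε₀pos))
        · refine Or.inl (hpunctN ⟨?_, hxα⟩)
          rw [mem_ball]
          calc dist x α ≤ ε₀/2 := mem_closedBall.mp hx
            _ < ε₀ := by linarith
    have hKO : connectedComponentIn (fimg)ᶜ α ⊆ O := by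
      have hKpre : IsPreconnected (connectedComponentIn (fimg)ᶜ α) :=
        isPreconnected_connectedComponentIn
      have hcov2 : connectedComponentIn (fimg)ᶜ α ⊆ O ∪ (closure O)ᶜ := by
        intro x hx
        by_cases h : x ∈ closure O
        · exact Or.inl (hclO x h (connectedComponentIn_subset _ _ hx))
        · exact Or.inr h
      by_contra hnot
      rw [Set.not_subset] at hnot
      obtain ⟨x₂, hx₂K, hx₂O⟩ := hnot
      have hx₂c : x₂ ∈ (closure O)ᶜ := (hcov2 hx₂K).resolve_left hx₂O
      obtain ⟨y, _, hyO, hyc⟩ := hKpre O (closure O)ᶜ hOopen isClosed_closure.isOpen_compl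
        hcov2 ⟨α, mem_connectedComponentIn hαK, hαO⟩ ⟨x₂, hx₂K, hx₂c⟩
      exact hyc (subset_closure hyO)
    intro x hx
    rcases hKO hx with h | h
    · have := hcase x h
      rw [mem_ball, Complex.dist_eq]
      linarith
    · rw [mem_ball] at h ⊢
      linarith
end
end

section
/- Let f be a transcendental entire function with a finite logarithmic asymptotic value α. If α ∈ F(f) and the Fatou component of f containing α is contained in BO(f), then f has an unbounded Fatou component contained in BO(f). -/
open Set Metric Filter Topology OnePoint

noncomputable section

section AuxiliaryLemmas

lemma mem_fatouSet_iff' (f : ℂ → ℂ) (z : ℂ) :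
    z ∈ fatouSet f ↔ ∀ V ∈ 𝓝ˢ (Set.diagonal (OnePoint ℂ)),
      ∀ᶠ x in 𝓝 z, ∀ n : ℕ,
        (((f^[n + 1] z : ℂ) : OnePoint ℂ), ((f^[n + 1] x : ℂ) : OnePoint ℂ)) ∈ V := Iff.rfl

lemma tract_unbounded (f : ℂ → ℂ) (hf : Differentiable ℂ f) {α : ℂ} {s : ℝ} (hs : 0 < s)
    {z₀ : ℂ} (hz₀ : f z₀ ∈ ball α s) (hz₀α : f z₀ ≠ α)
    (havoid : ∀ z ∈ connectedComponentIn (f ⁻¹' ball α s) z₀, f z ≠ α) :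
    ¬ Bornology.IsBounded (connectedComponentIn (f ⁻¹' ball α s) z₀) := by
  set P := f ⁻¹' ball α s with hP
  have hPopen : IsOpen P := isOpen_ball.preimage hf.continuous
  set W := connectedComponentIn P z₀ with hWdef
  have hWopen : IsOpen W := hPopen.connectedComponentIn
  have hz₀P : z₀ ∈ P := hz₀
  have hz₀W : z₀ ∈ W := mem_connectedComponentIn hz₀P
  intro hb
  have hfr : ∀ z ∈ frontier W, s ≤ ‖f z - α‖ := by
    intro z hz
    by_contra hlt
    push_neg at hlt
    have hzP : z ∈ P := by
      simp only [hP, mem_preimage, mem_ball, Complex.dist_eq]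
      exact hlt
    have hzW : z ∉ W := by
      rw [hWopen.frontier_eq] at hz
      exact hz.2
    have h1 : IsOpen (connectedComponentIn P z) := hPopen.connectedComponentIn
    have h2 : z ∈ closure W := frontier_subset_closure hz
    obtain ⟨y, hyC, hyW⟩ := mem_closure_iff.mp h2 _ h1 (mem_connectedComponentIn hzP)
    have e1 : connectedComponentIn P z = connectedComponentIn P y := connectedComponentIn_eq hyC
    have e2 : W = connectedComponentIn P y := connectedComponentIn_eq hyW
    exact hzW ((e2.trans e1.symm) ▸ mem_connectedComponentIn hzP)
  set g : ℂ → ℂ := fun z => (f z - α)⁻¹ with hg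
  have hclos : ∀ z ∈ closure W, f z - α ≠ 0 := by
    intro z hz
    rw [closure_eq_self_union_frontier] at hz
    rcases hz with hz | hz
    · exact sub_ne_zero.mpr (havoid z hz)
    · intro h0
      have := hfr z hz
      rw [h0] at this
      simp at this
      linarith
  have hgd : DiffContOnCl ℂ g W := by
    constructor
    · exact DifferentiableOn.inv ((hf.differentiableOn).sub (differentiableOn_const α))
        (fun z hz => sub_ne_zero.mpr (havoid z hz))
    · intro z hz
      exact (((hf.continuous.sub continuous_const).continuousAt).inv₀
        (hclos z hz)).continuousWithinAt
  have hle : ∀ z ∈ frontier W, ‖g z‖ ≤ s⁻¹ := by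
    intro z hz
    rw [hg]
    simp only [norm_inv]
    have h1 : s ≤ ‖f z - α‖ := hfr z hz
    exact inv_anti₀ hs h1
  have hfin := Complex.norm_le_of_forall_mem_frontier_norm_le hb hgd hle (subset_closure hz₀W)
  have ha : (0:ℝ) < ‖f z₀ - α‖ := by
    simpa using sub_ne_zero.mpr hz₀α
  have hlt : ‖f z₀ - α‖ < s := by
    rw [mem_ball, Complex.dist_eq] at hz₀
    exact hz₀
  have : s⁻¹ < (‖f z₀ - α‖)⁻¹ := by
    exact inv_strictAnti₀ ha hlt
  rw [hg] at hfin
  simp only [norm_inv] at hfin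
  linarith

lemma backward_mem_fatou (f : ℂ → ℂ) (hf : Continuous f) {z : ℂ} (h : f z ∈ fatouSet f) :
    z ∈ fatouSet f := by
  rw [mem_fatouSet_iff'] at h ⊢
  intro V hV
  have h2 : ∀ᶠ x in 𝓝 z, ∀ n : ℕ,
      (((f^[n + 1] (f z) : ℂ) : OnePoint ℂ), ((f^[n + 1] (f x) : ℂ) : OnePoint ℂ)) ∈ V :=
    (hf.tendsto z).eventually (h V hV)
  have h0 : ∀ᶠ x in 𝓝 z,
      (((f z : ℂ) : OnePoint ℂ), ((f x : ℂ) : OnePoint ℂ)) ∈ V := by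
    obtain ⟨O, hO, hdiag, hOV⟩ := mem_nhdsSet_iff_exists.mp hV
    have hcont : Continuous fun x : ℂ =>
        ((((f z : ℂ) : OnePoint ℂ), ((f x : ℂ) : OnePoint ℂ)) : OnePoint ℂ × OnePoint ℂ) :=
      continuous_const.prodMk (OnePoint.continuous_coe.comp hf)
    have hmem : ((((f z : ℂ) : OnePoint ℂ), ((f z : ℂ) : OnePoint ℂ)) :
        OnePoint ℂ × OnePoint ℂ) ∈ O := hdiag rfl
    exact ((hcont.tendsto z).eventually (hO.eventually_mem hmem)).mono fun x hx => hOV hx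
  filter_upwards [h2, h0] with x hx2 hx0
  intro n
  match n with
  | 0 => simpa using hx0
  | Nat.succ m =>
    have := hx2 m
    rw [← Function.iterate_succ_apply f (m + 1) z, ← Function.iterate_succ_apply f (m + 1) x]
      at this
    exact this

lemma forward_mem_fatou (f : ℂ → ℂ) (hf : Differentiable ℂ f)
    (hnc : ¬ ∃ c : ℂ, ∀ z, f z = c) {z : ℂ} (h : z ∈ fatouSet f) : f z ∈ fatouSet f := by
  rw [mem_fatouSet_iff'] at h ⊢
  intro V hV
  have hopen : 𝓝 (f z) ≤ map f (𝓝 z) := by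
    rcases (hf.analyticAt z).eventually_constant_or_nhds_le_map_nhds with hconst | hle
    · exfalso
      apply hnc
      refine ⟨f z, fun w => ?_⟩
      have := AnalyticOnNhd.eqOn_of_preconnected_of_eventuallyEq
        (fun w _ => hf.analyticAt w) (analyticOnNhd_const (v := f z)) isPreconnected_univ
        (mem_univ z) hconst
      exact this (mem_univ w)
    · exact hle
  apply hopen
  rw [mem_map]
  have h1 := h V hV
  filter_upwards [h1] with x hx
  intro n
  have := hx (n + 1)
  rw [Function.iterate_succ_apply f (n + 1) z, Function.iterate_succ_apply f (n + 1) x] at this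
  exact this

lemma ball_subset_fatou (f : ℂ → ℂ) (hf : Differentiable ℂ f) {α : ℂ}
    (hαF : α ∈ fatouSet f) {K : ℝ} (horb : ∀ n, ‖f^[n] α‖ < K) :
    ∃ ρ > 0, ball α ρ ⊆ fatouSet f := by
  have hK : 0 < K := lt_of_le_of_lt (norm_nonneg _) (horb 0)
  set A : Set (OnePoint ℂ) := ((↑) : ℂ → OnePoint ℂ) '' closedBall 0 K with hA
  set B : Set (OnePoint ℂ) := ((↑) : ℂ → OnePoint ℂ) '' ball 0 (K + 1) with hB
  have hABsub : A ⊆ B := image_mono (closedBall_subset_ball (lt_add_one K))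
  have hAcompact : IsCompact A := (isCompact_closedBall 0 K).image OnePoint.continuous_coe
  have hAclosed : IsClosed A := hAcompact.isClosed
  have hBopen : IsOpen B := OnePoint.isOpenEmbedding_coe.isOpenMap _ isOpen_ball
  set S : Set (OnePoint ℂ × OnePoint ℂ) := {p | p.1 ∈ A → p.2 ∈ B} with hSdef
  have hS : S ∈ 𝓝ˢ (Set.diagonal (OnePoint ℂ)) := by
    rw [mem_nhdsSet_iff_forall]
    rintro ⟨x, y⟩ (rfl : x = y)
    by_cases hx : x ∈ A
    · refine mem_of_superset (prod_mem_nhds univ_mem (hBopen.mem_nhds (hABsub hx))) ?_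
      rintro ⟨a, b⟩ ⟨-, hb⟩ -
      exact hb
    · refine mem_of_superset (prod_mem_nhds (hAclosed.isOpen_compl.mem_nhds hx) univ_mem) ?_
      rintro ⟨a, b⟩ ⟨ha, -⟩ h
      exact absurd h ha
  have hN : ∀ᶠ x in 𝓝 α, ∀ n : ℕ, ‖f^[n + 1] x‖ < K + 1 := by
    have h1 := (mem_fatouSet_iff' f α).mp hαF S hS
    filter_upwards [h1] with x hx n
    have h2 : (((f^[n + 1] α : ℂ)) : OnePoint ℂ) ∈ A := by
      refine mem_image_of_mem _ ?_
      simp only [mem_closedBall, Complex.dist_eq, sub_zero]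
      exact (horb (n + 1)).le
    obtain ⟨b, hb, hbe⟩ := hx n h2
    rw [OnePoint.coe_eq_coe] at hbe
    subst hbe
    simpa [Complex.dist_eq] using hb
  obtain ⟨ρ', hρ'pos, hρ'⟩ := Metric.mem_nhds_iff.mp hN
  set ρ := ρ' / 2 with hρdef
  have hρpos : 0 < ρ := half_pos hρ'pos
  refine ⟨ρ, hρpos, ?_⟩
  intro y hy
  rw [mem_fatouSet_iff']
  intro V hV
  set M := K + 1 with hM
  have hMpos : 0 < M := by positivity
  have hval : ∀ x ∈ ball α ρ', ∀ n : ℕ, f^[n + 1] x ∈ closedBall (0 : ℂ) M := by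
    intro x hx n
    simp only [mem_closedBall, Complex.dist_eq, sub_zero]
    exact (hρ' hx n).le
  have hsub : ball y ρ ⊆ ball α ρ' := by
    intro w hw
    rw [mem_ball] at hw hy ⊢
    calc dist w α ≤ dist w y + dist y α := dist_triangle w y α
    _ < ρ + ρ := by exact add_lt_add hw hy
    _ = ρ' := by rw [hρdef]; ring
  have hyρ' : y ∈ ball α ρ' := hsub (mem_ball_self hρpos)
  have hlip : ∀ n : ℕ, ∀ x ∈ ball y ρ,
      dist (f^[n + 1] x) (f^[n + 1] y) ≤ (2 * M + 1) / ρ * dist x y := by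
    intro n x hx
    have hd : DifferentiableOn ℂ (f^[n + 1]) (ball y ρ) :=
      (hf.iterate (n + 1)).differentiableOn
    have hmaps : Set.MapsTo (f^[n + 1]) (ball y ρ) (ball (f^[n + 1] y) (2 * M + 1)) := by
      intro w hw
      have h1 := hval w (hsub hw) n
      have h2 := hval y hyρ' n
      rw [mem_closedBall_zero_iff] at h1 h2
      rw [mem_ball]
      calc dist (f^[n + 1] w) (f^[n + 1] y) ≤ ‖f^[n + 1] w‖ + ‖f^[n + 1] y‖ :=
            dist_le_norm_add_norm _ _
      _ ≤ M + M := add_le_add h1 h2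
      _ < 2 * M + 1 := by linarith
    exact Complex.dist_le_div_mul_dist_of_mapsTo_ball hd (hmaps.mono_right ball_subset_closedBall) hx
  obtain ⟨O, hO, hdiag, hOV⟩ := mem_nhdsSet_iff_exists.mp hV
  have hh2 : Continuous fun p : ℂ × ℂ => (((p.1 : OnePoint ℂ), (p.2 : OnePoint ℂ)) :
      OnePoint ℂ × OnePoint ℂ) :=
    (OnePoint.continuous_coe.comp continuous_fst).prodMk
      (OnePoint.continuous_coe.comp continuous_snd)
  set O' : Set (ℂ × ℂ) := (fun p : ℂ × ℂ => (((p.1 : OnePoint ℂ), (p.2 : OnePoint ℂ)) :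
      OnePoint ℂ × OnePoint ℂ)) ⁻¹' O with hO'def
  have hO'open : IsOpen O' := hO.preimage hh2
  have hdiag' : ∀ a : ℂ, (a, a) ∈ O' := fun a => hdiag rfl
  set Q := closedBall (0 : ℂ) M with hQ
  set Kc := (Q ×ˢ Q) ∩ O'ᶜ with hKc
  have hKcomp : IsCompact Kc :=
    ((isCompact_closedBall _ _).prod (isCompact_closedBall _ _)).inter_right
      hO'open.isClosed_compl
  have hε : ∃ ε > 0, ∀ a ∈ Q, ∀ b ∈ Q, dist a b < ε →
      (((a : OnePoint ℂ), (b : OnePoint ℂ)) : OnePoint ℂ × OnePoint ℂ) ∈ V := by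
    rcases Kc.eq_empty_or_nonempty with hemp | hne
    · refine ⟨1, one_pos, fun a ha b hb _ => ?_⟩
      by_cases hab : (a, b) ∈ O'
      · exact hOV hab
      · exact absurd (show (a, b) ∈ Kc from ⟨⟨ha, hb⟩, hab⟩)
          (by rw [hemp]; exact notMem_empty _)
    · obtain ⟨p, hp, hmin⟩ := hKcomp.exists_isMinOn hne continuous_dist.continuousOn
      have hppos : 0 < dist p.1 p.2 := by
        rw [dist_pos]
        intro he
        exact hp.2 (by rw [show p = (p.1, p.2) from rfl, he]; exact hdiag' p.2)
      refine ⟨dist p.1 p.2, hppos, fun a ha b hb hab => ?_⟩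
      by_cases hO'ab : (a, b) ∈ O'
      · exact hOV hO'ab
      · have hmem : (a, b) ∈ Kc := ⟨⟨ha, hb⟩, hO'ab⟩
        have := isMinOn_iff.mp hmin _ hmem
        simp only at this
        linarith
  obtain ⟨ε, hε0, hεp⟩ := hε
  set δ := min ρ (ε * ρ / (2 * M + 1)) with hδdef
  have hδ0 : 0 < δ := lt_min hρpos (by positivity)
  filter_upwards [Metric.ball_mem_nhds y hδ0] with x hx
  intro n
  have hxρ : x ∈ ball y ρ := by
    rw [mem_ball] at hx ⊢
    exact lt_of_lt_of_le hx (min_le_left _ _)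
  have hdist := hlip n x hxρ
  have hlt : dist (f^[n + 1] x) (f^[n + 1] y) < ε := by
    have h1 : dist x y < ε * ρ / (2 * M + 1) :=
      lt_of_lt_of_le (mem_ball.mp hx) (min_le_right _ _)
    have h2 : (0:ℝ) < (2 * M + 1) / ρ := by positivity
    calc dist (f^[n + 1] x) (f^[n + 1] y) ≤ (2 * M + 1) / ρ * dist x y := hdist
    _ < (2 * M + 1) / ρ * (ε * ρ / (2 * M + 1)) := by
        apply mul_lt_mul_of_pos_left h1 h2
    _ = ε := by field_simp
  exact hεp _ (hval y hyρ' n) _ (hval x (hsub hxρ) n) (by rwa [dist_comm])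

end AuxiliaryLemmas

theorem unbounded_fatou_component_in_BO (f : ℂ → ℂ)
    (hf : EntireTranscendental f) (α : ℂ) (hα : IsLogAsymptoticValue f α)
    (hαF : α ∈ fatouSet f)
    (hcomp : connectedComponentIn (fatouSet f) α ⊆ boundedOrbitSet f) :
    ∃ U : Set ℂ, IsFatouComponent f U ∧ ¬ Bornology.IsBounded U ∧
      U ⊆ boundedOrbitSet f := by
  obtain ⟨hdiff, hpoly⟩ := hf
  have hfc : Continuous f := hdiff.continuous
  have hnc : ¬ ∃ c : ℂ, ∀ z, f z = c := by
    rintro ⟨c, hc⟩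
    exact hpoly ⟨Polynomial.C c, fun z => by rw [hc z, Polynomial.eval_C]⟩
  have hαV : α ∈ connectedComponentIn (fatouSet f) α := mem_connectedComponentIn hαF
  obtain ⟨K, hK, horb⟩ := hcomp hαV
  obtain ⟨ρ, hρ0, hball⟩ := ball_subset_fatou f hdiff hαF horb
  obtain ⟨r, hr, U, ⟨zU, hzUmem, hUeq⟩, hsc, hmaps, hcov, hsurj⟩ := hα
  set ρ' := min ρ r with hρ'def
  have hρ'0 : 0 < ρ' := lt_min hρ0 hr
  -- pick z₀ in the tract with f z₀ close to α
  set β : ℂ := α + ((ρ' / 2 : ℝ) : ℂ) with hβdef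
  have hβα : ‖β - α‖ = ρ' / 2 := by
    rw [hβdef]
    simp only [add_sub_cancel_left, Complex.norm_real, Real.norm_eq_abs]
    rw [abs_of_pos (half_pos hρ'0)]
  have hβ : β ∈ ball α r \ {α} := by
    constructor
    · rw [mem_ball, Complex.dist_eq, hβα]
      have := min_le_right ρ r
      rw [← hρ'def] at this
      linarith
    · simp only [mem_singleton_iff]
      intro he
      rw [he] at hβα
      simp at hβα
      linarith
  obtain ⟨a, ha⟩ := hsurj ⟨β, hβ⟩
  have hfz₀ : f (a : ℂ) = β := Subtype.ext_iff.mp ha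
  set z₀ : ℂ := (a : ℂ) with hz₀def
  have hz₀U : z₀ ∈ U := a.2
  have hfz₀α : ‖f z₀ - α‖ = ρ' / 2 := by rw [hfz₀]; exact hβα
  have hfz₀ne : f z₀ ≠ α := by
    intro he
    rw [he] at hfz₀α
    simp at hfz₀α
    linarith
  have hz₀P' : z₀ ∈ f ⁻¹' ball α ρ' := by
    simp only [mem_preimage, mem_ball, Complex.dist_eq, hfz₀α]
    linarith
  have hfballρ' : f z₀ ∈ ball α ρ' := hz₀P'
  -- the tract component
  set W := connectedComponentIn (f ⁻¹' ball α ρ') z₀ with hWdef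
  have hz₀W : z₀ ∈ W := mem_connectedComponentIn hz₀P'
  have hUz₀ : U = connectedComponentIn (f ⁻¹' ball α r) z₀ := by
    have h1 : z₀ ∈ connectedComponentIn (f ⁻¹' ball α r) zU := hUeq ▸ hz₀U
    rw [hUeq]
    exact connectedComponentIn_eq h1
  have hWU : W ⊆ U := by
    rw [hUz₀]
    exact isPreconnected_connectedComponentIn.subset_connectedComponentIn
      (mem_connectedComponentIn hz₀P')
      ((connectedComponentIn_subset _ _).trans
        (preimage_mono (ball_subset_ball (min_le_right ρ r))))
  have havoid : ∀ z ∈ W, f z ≠ α := by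
    intro z hz he
    exact (hmaps (hWU hz)).2 (by rw [he]; rfl)
  have hWunb : ¬ Bornology.IsBounded W :=
    tract_unbounded f hdiff hρ'0 hfballρ' hfz₀ne havoid
  have hWF : W ⊆ fatouSet f := by
    intro z hz
    apply backward_mem_fatou f hfc
    apply hball
    have hzP : z ∈ f ⁻¹' ball α ρ' := connectedComponentIn_subset _ _ hz
    rw [mem_preimage] at hzP
    exact ball_subset_ball (min_le_left ρ r) hzP
  have hz₀F : z₀ ∈ fatouSet f := hWF hz₀W
  refine ⟨connectedComponentIn (fatouSet f) z₀, ⟨z₀, hz₀F, rfl⟩, ?_, ?_⟩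
  · intro hb
    exact hWunb (hb.subset
      (isPreconnected_connectedComponentIn.subset_connectedComponentIn hz₀W hWF))
  · -- contained in boundedOrbitSet
    have hballV : ball α ρ ⊆ connectedComponentIn (fatouSet f) α :=
      (convex_ball α ρ).isPreconnected.subset_connectedComponentIn (mem_ball_self hρ0) hball
    have hfz₀ball : f z₀ ∈ ball α ρ :=
      ball_subset_ball (min_le_left ρ r) hfballρ'
    intro z hzC
    set C := connectedComponentIn (fatouSet f) z₀ with hCdef
    have hfCsub : f '' C ⊆ fatouSet f := by
      rintro _ ⟨w, hw, rfl⟩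
      exact forward_mem_fatou f hdiff hnc (connectedComponentIn_subset _ _ hw)
    have hpc : IsPreconnected (f '' C) :=
      isPreconnected_connectedComponentIn.image f hfc.continuousOn
    have h3 : f '' C ⊆ connectedComponentIn (fatouSet f) (f z₀) :=
      hpc.subset_connectedComponentIn
        (mem_image_of_mem f (mem_connectedComponentIn hz₀F)) hfCsub
    have h4 : connectedComponentIn (fatouSet f) α = connectedComponentIn (fatouSet f) (f z₀) :=
      connectedComponentIn_eq (hballV hfz₀ball)
    have hfzV : f z ∈ connectedComponentIn (fatouSet f) α := by
      rw [h4]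
      exact h3 (mem_image_of_mem f hzC)
    obtain ⟨K₁, hK₁0, hK₁⟩ := hcomp hfzV
    refine ⟨max K₁ (‖z‖ + 1), lt_of_lt_of_le hK₁0 (le_max_left _ _), fun n => ?_⟩
    match n with
    | 0 =>
      simp only [Function.iterate_zero, id]
      exact lt_of_lt_of_le (lt_add_one _) (le_max_right _ _)
    | Nat.succ m =>
      rw [Function.iterate_succ_apply]
      exact lt_of_lt_of_le (hK₁ m) (le_max_left _ _)
end
end
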